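/- In the Monte Carlo design where X̃ = (X₂,…,X_d) are i.i.d. U(−1,1), X₁ = sgn(X₂)·U with U ~ U(0,1) independent of X̃, and β = (1,0,…,0), the identified set Θ = {b ∈ Γ : (X'b)(X'β) ≥ 0 a.s.} equals {b ∈ Γ : b₂ ≥ 0 and b_k = 0 for k ∈ {3,…,d}}, where Γ = {b ∈ ℝ^d : b₁ = 1, (b₂,…,b_d) ∈ [−1,1]^{d−1}}. -/

import Mathlib

open MeasureTheory ProbabilityTheory Set

/-- The uniform probability measure on the interval `(a, b)`. -/
noncomputable def uniformOnIoo (a b : ℝ) : Measure ℝ :=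
  (ENNReal.ofReal (b - a))⁻¹ • (volume.restrict (Ioo a b))

/-- Lower endpoint of a sign-adapted interval. -/
noncomputable def sgnA (x : ℝ) : ℝ := if 0 < x then -1/2 else if x < 0 then 1/4 else -1/4

/-- Upper endpoint of a sign-adapted interval. -/
noncomputable def sgnC (x : ℝ) : ℝ := if 0 < x then -1/4 else if x < 0 then 1/2 else 1/4

lemma sgnA_lt_sgnC (x : ℝ) : sgnA x < sgnC x := by
  unfold sgnA sgnC; split_ifs <;> norm_num

lemma sgnA_mem (x : ℝ) : -1 ≤ sgnA x ∧ sgnC x ≤ 1 := by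
  unfold sgnA sgnC; split_ifs <;> norm_num

lemma mul_nonpos_of_mem_sgn {x z : ℝ} (hz : z ∈ Ioo (sgnA x) (sgnC x)) : z * x ≤ 0 := by
  unfold sgnA sgnC at hz
  rcases lt_trichotomy x 0 with h | h | h
  · simp only [if_neg (not_lt.mpr h.le), if_pos h] at hz
    nlinarith [hz.1]
  · simp [h]
  · simp only [if_pos h] at hz
    nlinarith [hz.2]

lemma mul_le_of_mem_sgn {x z : ℝ} (hz : z ∈ Ioo (sgnA x) (sgnC x)) : z * x ≤ -|x| / 4 := by
  unfold sgnA sgnC at hz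
  rcases lt_trichotomy x 0 with h | h | h
  · simp only [if_neg (not_lt.mpr h.le), if_pos h] at hz
    rw [abs_of_neg h]
    nlinarith [hz.1]
  · simp [h]
  · simp only [if_pos h] at hz
    rw [abs_of_pos h]
    nlinarith [hz.2]

/-- Key auxiliary lemma: a product-box on which the linear index is negative has positive
probability, contradicting the a.s. sign restriction. -/
lemma key_false {d : ℕ} [NeZero d] (hd : 3 ≤ d)
    {Ω : Type*} [MeasurableSpace Ω]
    (μ : Measure Ω) [IsProbabilityMeasure μ]
    (X : Ω → Fin d → ℝ) (hX : Measurable X)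
    (U : Ω → ℝ) (hU : Measurable U)
    (hlawU : μ.map U = uniformOnIoo 0 1)
    (hlawX : ∀ k : Fin d, k ≠ 0 → μ.map (fun ω => X ω k) = uniformOnIoo (-1) 1)
    (Z : Fin d → Ω → ℝ)
    (hZ0 : Z 0 = U) (hZk : ∀ k : Fin d, k ≠ 0 → Z k = fun ω => X ω k)
    (hindep : iIndepFun Z μ)
    (hX1 : ∀ ω, X ω 0 = Real.sign (X ω 1) * U ω)
    (b : Fin d → ℝ) (hb0 : b 0 = 1)
    (hae : ∀ᵐ ω ∂μ, (∑ i, X ω i * b i) * X ω 0 ≥ 0)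
    (a c : Fin d → ℝ) (hac : ∀ k, a k < c k)
    (ha0 : 0 ≤ a 0) (hc0 : c 0 ≤ 1)
    (ha1 : 0 < a 1)
    (hbd : ∀ k : Fin d, k ≠ 0 → -1 ≤ a k ∧ c k ≤ 1)
    (hneg : ∀ z : Fin d → ℝ, (∀ k, z k ∈ Ioo (a k) (c k)) →
       z 0 + ∑ i ∈ Finset.univ.erase 0, z i * b i < 0) : False := by
  have h1ne : (1 : Fin d) ≠ 0 := by
    have hv : (1 : Fin d).val = 1 := by
      simp [Fin.val_one', Nat.mod_eq_of_lt (show 1 < d by omega)]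
    intro h
    rw [h] at hv
    simp at hv
  have hmeas : ∀ k, Measurable (Z k) := by
    intro k
    rcases eq_or_ne k 0 with h | h
    · rw [h, hZ0]; exact hU
    · rw [hZk k h]; exact hX.eval
  -- the box event
  have hE := hindep.measure_inter_preimage_eq_mul (S := Finset.univ)
    (sets := fun k => Ioo (a k) (c k)) (fun i _ => measurableSet_Ioo)
  -- each factor is nonzero
  have hfac : ∀ k : Fin d, μ (Z k ⁻¹' Ioo (a k) (c k)) ≠ 0 := by
    intro k
    rw [← Measure.map_apply (hmeas k) measurableSet_Ioo]
    rcases eq_or_ne k 0 with h | h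
    · rw [h, hZ0, hlawU]
      have hsub : Ioo (a 0) (c 0) ⊆ Ioo (0 : ℝ) 1 :=
        Ioo_subset_Ioo ha0 hc0
      simp only [uniformOnIoo, Measure.smul_apply, smul_eq_mul,
        Measure.restrict_apply measurableSet_Ioo, inter_eq_self_of_subset_left hsub]
      rw [Real.volume_Ioo]
      simp only [ne_eq, mul_eq_zero, not_or, inv_eq_zero]
      constructor
      · simp [ENNReal.inv_eq_zero]
      · simp only [ENNReal.ofReal_eq_zero, not_le]
        linarith [hac 0]
    · rw [hZk k h, hlawX k h]
      have hsub : Ioo (a k) (c k) ⊆ Ioo (-1 : ℝ) 1 :=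
        Ioo_subset_Ioo (hbd k h).1 (hbd k h).2
      simp only [uniformOnIoo, Measure.smul_apply, smul_eq_mul,
        Measure.restrict_apply measurableSet_Ioo, inter_eq_self_of_subset_left hsub]
      rw [Real.volume_Ioo]
      simp only [ne_eq, mul_eq_zero, not_or, inv_eq_zero]
      constructor
      · simp [ENNReal.inv_eq_zero]
      · simp only [ENNReal.ofReal_eq_zero, not_le]
        linarith [hac k]
  have hEne : μ (⋂ i ∈ Finset.univ, Z i ⁻¹' Ioo (a i) (c i)) ≠ 0 := by
    rw [hE]
    exact Finset.prod_ne_zero_iff.mpr fun i _ => hfac i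
  -- but the box is contained in the bad event
  have hsub : (⋂ i ∈ Finset.univ, Z i ⁻¹' Ioo (a i) (c i)) ⊆
      {ω | ¬ (∑ i, X ω i * b i) * X ω 0 ≥ 0} := by
    intro ω hω
    simp only [Finset.mem_univ, iInter_true, mem_iInter, mem_preimage] at hω
    have hz : ∀ k, Z k ω ∈ Ioo (a k) (c k) := hω
    have hU0 : U ω ∈ Ioo (a 0) (c 0) := by rw [← hZ0]; exact hz 0
    have hUpos : 0 < U ω := lt_of_le_of_lt ha0 hU0.1
    have hX1pos : 0 < X ω 1 := by
      have := hz 1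
      rw [hZk 1 h1ne] at this
      exact lt_trans ha1 this.1
    have hsgn : Real.sign (X ω 1) = 1 := Real.sign_of_pos hX1pos
    have hX0 : X ω 0 = U ω := by rw [hX1, hsgn, one_mul]
    have hsum : ∑ i, X ω i * b i = U ω + ∑ i ∈ Finset.univ.erase 0, X ω i * b i := by
      rw [← Finset.sum_erase_add Finset.univ _ (Finset.mem_univ (0 : Fin d)),
        hX0, hb0, mul_one, add_comm]
    have hsum2 : ∑ i ∈ Finset.univ.erase 0, X ω i * b i
        = ∑ i ∈ Finset.univ.erase 0, Z i ω * b i := by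
      apply Finset.sum_congr rfl
      intro i hi
      rw [hZk i (Finset.ne_of_mem_erase hi)]
    have hlt : ∑ i, X ω i * b i < 0 := by
      have h' := hneg (fun k => Z k ω) hz
      rw [hsum, hsum2]
      simpa only [hZ0] using h'
    simp only [mem_setOf_eq, not_le, ge_iff_le]
    rw [hX0]
    exact mul_neg_of_neg_of_pos hlt hUpos
  have : μ (⋂ i ∈ Finset.univ, Z i ⁻¹' Ioo (a i) (c i)) = 0 := by
    apply measure_mono_null hsub
    rw [ae_iff] at hae
    exact hae
  exact hEne this

/-- In the Monte Carlo design where `X₂,…,X_d` are i.i.d. `U(−1,1)`,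
`X₁ = sgn(X₂)·U` with `U ~ U(0,1)` independent of `(X₂,…,X_d)`, and `β = (1,0,…,0)`
(so `X'β = X₁`), the identified set `Θ = {b ∈ Γ : (X'b)(X'β) ≥ 0 a.s.}` equals
`{b ∈ Γ : b₂ ≥ 0 and b_k = 0 for k ∈ {3,…,d}}`, where
`Γ = {b ∈ ℝ^d : b₁ = 1, (b₂,…,b_d) ∈ [−1,1]^{d−1}}`.
(Coordinates are indexed by `Fin d`, so `b 0` is `b₁`, `b 1` is `b₂`, etc.) -/
theorem monte_carlo_identified_set {d : ℕ} [NeZero d] (hd : 3 ≤ d)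
    {Ω : Type*} [MeasurableSpace Ω]
    (μ : Measure Ω) [IsProbabilityMeasure μ]
    (X : Ω → Fin d → ℝ) (hX : Measurable X)
    (U : Ω → ℝ) (hU : Measurable U)
    -- laws: U ~ U(0,1) and X_k ~ U(−1,1) for k ≥ 2
    (hlawU : μ.map U = uniformOnIoo 0 1)
    (hlawX : ∀ k : Fin d, k ≠ 0 → μ.map (fun ω => X ω k) = uniformOnIoo (-1) 1)
    -- U and (X₂,…,X_d) are mutually independent
    (Z : Fin d → Ω → ℝ)
    (hZ0 : Z 0 = U) (hZk : ∀ k : Fin d, k ≠ 0 → Z k = fun ω => X ω k)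
    (hindep : iIndepFun Z μ)
    -- X₁ = sgn(X₂)·U
    (hX1 : ∀ ω, X ω 0 = Real.sign (X ω 1) * U ω) :
    {b : Fin d → ℝ |
        (b 0 = 1 ∧ ∀ k : Fin d, k ≠ 0 → b k ∈ Icc (-1:ℝ) 1) ∧
        ∀ᵐ ω ∂μ, (∑ i, X ω i * b i) * X ω 0 ≥ 0} =
    {b : Fin d → ℝ |
        (b 0 = 1 ∧ ∀ k : Fin d, k ≠ 0 → b k ∈ Icc (-1:ℝ) 1) ∧
        0 ≤ b 1 ∧ ∀ k : Fin d, 2 ≤ (k : ℕ) → b k = 0} := by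
  have hv1 : (1 : Fin d).val = 1 := by
    simp [Fin.val_one', Nat.mod_eq_of_lt (show 1 < d by omega)]
  have h1ne : (1 : Fin d) ≠ 0 := by
    intro h; rw [h] at hv1; simp at hv1
  ext b
  simp only [mem_setOf_eq]
  constructor
  · rintro ⟨hΓ, hae⟩
    have hb0 : b 0 = 1 := hΓ.1
    have hb1Icc : b 1 ∈ Icc (-1 : ℝ) 1 := hΓ.2 1 h1ne
    refine ⟨hΓ, ?_, ?_⟩
    · -- 0 ≤ b 1
      by_contra hcon
      push_neg at hcon
      -- construct a bad box
      set a : Fin d → ℝ := fun k =>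
        if k = 0 then 0 else if k = 1 then 1/2 else sgnA (b k) with ha_def
      set c : Fin d → ℝ := fun k =>
        if k = 0 then -(b 1)/4 else if k = 1 then 3/4 else sgnC (b k) with hc_def
      refine key_false hd μ X hX U hU hlawU hlawX Z hZ0 hZk hindep hX1 b hb0 hae a c
        ?_ ?_ ?_ ?_ ?_ ?_
      · intro k
        simp only [ha_def, hc_def]
        split_ifs with h h'
        · linarith
        · norm_num
        · exact sgnA_lt_sgnC _
      · simp [ha_def]
      · simp only [hc_def, if_pos rfl, if_true]
        linarith [hb1Icc.1]
      · simp [ha_def, h1ne]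
      · intro k hk
        simp only [ha_def, hc_def, if_neg hk]
        split_ifs with h'
        · norm_num
        · exact sgnA_mem (b k)
      · intro z hz
        have hz0 := hz 0
        have hz1 := hz 1
        simp only [ha_def, hc_def, if_pos rfl, if_true, if_neg h1ne] at hz0
        simp only [ha_def, hc_def, if_neg h1ne, if_pos rfl, if_true] at hz1
        have hmem1 : (1 : Fin d) ∈ Finset.univ.erase (0 : Fin d) :=
          Finset.mem_erase.mpr ⟨h1ne, Finset.mem_univ _⟩
        rw [← Finset.sum_erase_add _ _ hmem1]
        have hrest : ∑ i ∈ (Finset.univ.erase (0 : Fin d)).erase 1, z i * b i ≤ 0 := by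
          apply Finset.sum_nonpos
          intro i hi
          have hi1 : i ≠ 1 := (Finset.mem_erase.mp hi).1
          have hi0 : i ≠ 0 := (Finset.mem_erase.mp (Finset.mem_erase.mp hi).2).1
          have hzi := hz i
          simp only [ha_def, hc_def, if_neg hi0, if_neg hi1] at hzi
          exact mul_nonpos_of_mem_sgn hzi
        nlinarith [hz0.2, hz1.1, hz1.2, hcon, hrest,
          mul_lt_mul_of_neg_right hz1.1 hcon]
    · -- b k = 0 for k ≥ 2
      intro j hj
      by_contra hcon
      have hj0 : j ≠ 0 := by
        intro h; rw [h] at hj; simp at hj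
      have hj1 : j ≠ 1 := by
        intro h; rw [h, hv1] at hj; omega
      have hjIcc : b j ∈ Icc (-1 : ℝ) 1 := hΓ.2 j hj0
      set t : ℝ := |b j| / 4 with ht_def
      have ht0 : 0 < t := by
        have : 0 < |b j| := abs_pos.mpr hcon
        simp only [ht_def]; linarith
      have ht1 : t ≤ 1/4 := by
        have : |b j| ≤ 1 := abs_le.mpr ⟨hjIcc.1, hjIcc.2⟩
        simp only [ht_def]; linarith
      set a : Fin d → ℝ := fun k =>
        if k = 0 then 0 else if k = 1 then t/8 else sgnA (b k) with ha_def
      set c : Fin d → ℝ := fun k =>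
        if k = 0 then t/4 else if k = 1 then t/4 else sgnC (b k) with hc_def
      refine key_false hd μ X hX U hU hlawU hlawX Z hZ0 hZk hindep hX1 b hb0 hae a c
        ?_ ?_ ?_ ?_ ?_ ?_
      · intro k
        simp only [ha_def, hc_def]
        split_ifs with h h'
        · linarith
        · linarith
        · exact sgnA_lt_sgnC _
      · simp [ha_def]
      · simp only [hc_def, if_pos rfl, if_true]; linarith
      · simp only [ha_def, if_neg h1ne, if_pos rfl, if_true]; linarith
      · intro k hk
        simp only [ha_def, hc_def, if_neg hk]
        split_ifs with h'
        · constructor <;> linarith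
        · exact sgnA_mem (b k)
      · intro z hz
        have hz0 := hz 0
        have hz1 := hz 1
        have hzj := hz j
        simp only [ha_def, hc_def, if_pos rfl, if_true, if_neg h1ne] at hz0
        simp only [ha_def, hc_def, if_neg h1ne, if_pos rfl, if_true] at hz1
        simp only [ha_def, hc_def, if_neg hj0, if_neg hj1] at hzj
        have hmem1 : (1 : Fin d) ∈ Finset.univ.erase (0 : Fin d) :=
          Finset.mem_erase.mpr ⟨h1ne, Finset.mem_univ _⟩
        have hmemj : j ∈ (Finset.univ.erase (0 : Fin d)).erase 1 :=
          Finset.mem_erase.mpr ⟨hj1, Finset.mem_erase.mpr ⟨hj0, Finset.mem_univ _⟩⟩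
        rw [← Finset.sum_erase_add _ _ hmem1, ← Finset.sum_erase_add _ _ hmemj]
        have hrest : ∑ i ∈ ((Finset.univ.erase (0 : Fin d)).erase 1).erase j,
            z i * b i ≤ 0 := by
          apply Finset.sum_nonpos
          intro i hi
          have hij : i ≠ j := (Finset.mem_erase.mp hi).1
          have hi1 : i ≠ 1 := (Finset.mem_erase.mp (Finset.mem_erase.mp hi).2).1
          have hi0 : i ≠ 0 :=
            (Finset.mem_erase.mp (Finset.mem_erase.mp (Finset.mem_erase.mp hi).2).2).1
          have hzi := hz i
          simp only [ha_def, hc_def, if_neg hi0, if_neg hi1] at hzi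
          exact mul_nonpos_of_mem_sgn hzi
        have hjle : z j * b j ≤ -|b j| / 4 := mul_le_of_mem_sgn hzj
        have hb1le : b 1 ≤ 1 := hb1Icc.2
        have hz1b1 : z 1 * b 1 ≤ t/4 := by
          have hz1pos : 0 < z 1 := lt_trans (by linarith) hz1.1
          nlinarith [mul_le_mul_of_nonneg_left hb1le hz1pos.le, hz1.2]
        have htabs : -|b j| / 4 = -t := by rw [ht_def]; ring
        rw [htabs] at hjle
        linarith [hz0.2]
  · rintro ⟨hΓ, hb1, hbk⟩
    refine ⟨hΓ, ?_⟩
    have hU01 : ∀ᵐ ω ∂μ, U ω ∈ Ioo (0 : ℝ) 1 := by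
      rw [ae_iff]
      have heq : {ω | ¬ U ω ∈ Ioo (0:ℝ) 1} = U ⁻¹' (Ioo (0:ℝ) 1)ᶜ := rfl
      rw [heq, ← Measure.map_apply hU measurableSet_Ioo.compl, hlawU]
      simp only [uniformOnIoo, Measure.smul_apply, smul_eq_mul,
        Measure.restrict_apply measurableSet_Ioo.compl]
      rw [compl_inter_self]
      simp
    filter_upwards [hU01] with ω hω
    have hsum : ∑ i, X ω i * b i = X ω 0 + X ω 1 * b 1 := by
      have hmem1 : (1 : Fin d) ∈ Finset.univ.erase (0 : Fin d) :=
        Finset.mem_erase.mpr ⟨h1ne, Finset.mem_univ _⟩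
      rw [← Finset.sum_erase_add Finset.univ _ (Finset.mem_univ (0 : Fin d)),
        ← Finset.sum_erase_add _ _ hmem1]
      have hrest : ∑ i ∈ (Finset.univ.erase (0 : Fin d)).erase 1, X ω i * b i = 0 := by
        apply Finset.sum_eq_zero
        intro i hi
        have hi1 : i ≠ 1 := (Finset.mem_erase.mp hi).1
        have hi0 : i ≠ 0 := (Finset.mem_erase.mp (Finset.mem_erase.mp hi).2).1
        have hival : 2 ≤ (i : ℕ) := by
          have h0 : (i : ℕ) ≠ 0 := by
            intro h; exact hi0 (Fin.ext (by simp [h]))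
          have h1 : (i : ℕ) ≠ 1 := by
            intro h; exact hi1 (Fin.ext (h.trans hv1.symm))
          omega
        rw [hbk i hival, mul_zero]
      rw [hrest, hΓ.1, mul_one, zero_add, add_comm]
    rw [hsum]
    have hsgn : 0 ≤ X ω 1 * Real.sign (X ω 1) := by
      rcases lt_trichotomy (X ω 1) 0 with h | h | h
      · rw [Real.sign_of_neg h]; linarith
      · simp [h]
      · rw [Real.sign_of_pos h]; linarith
    have hX1X0 : 0 ≤ X ω 1 * X ω 0 := by
      rw [hX1 ω]
      calc (0:ℝ) ≤ (X ω 1 * Real.sign (X ω 1)) * U ω :=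
            mul_nonneg hsgn hω.1.le
        _ = X ω 1 * (Real.sign (X ω 1) * U ω) := by ring
    have : (0:ℝ) ≤ X ω 0 * X ω 0 + b 1 * (X ω 1 * X ω 0) := by
      nlinarith [sq_nonneg (X ω 0), mul_nonneg hb1 hX1X0]
    calc (0:ℝ) ≤ X ω 0 * X ω 0 + b 1 * (X ω 1 * X ω 0) := this
      _ = (X ω 0 + X ω 1 * b 1) * X ω 0 := by ring
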